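/- With ϑ the unique root of -log x - 2 + 2x = 0 in (0,1), the limit as n → ∞ of P(⌊ϑn⌋, n), where P(r,n) = Σ_{i=r+1}^{n} 2(i-r)r/(i(i-1)n), equals 2(ϑ - ϑ²). -/

import Mathlib

open Real Filter Finset

/-- Closed form of the cutoff sum in terms of harmonic numbers. -/
lemma sum_closed (r : ℕ) (hr : 1 ≤ r) : ∀ n : ℕ, r ≤ n →
    ∑ i ∈ Finset.Icc (r + 1) n, 2 * ((i : ℝ) - r) * r / ((i : ℝ) * ((i : ℝ) - 1))
      = 2 * r * (((harmonic n : ℚ) : ℝ) - ((harmonic r : ℚ) : ℝ) - 1 + 1 / r)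
        + 2 * r * ((r : ℝ) - 1) / n := by
  refine Nat.le_induction ?_ ?_
  · have hr0 : (r : ℝ) ≠ 0 := Nat.cast_ne_zero.mpr (by omega)
    rw [Finset.Icc_eq_empty (by omega)]
    simp only [Finset.sum_empty]
    field_simp
    ring
  · intro n hn ih
    have hn0 : (n : ℝ) ≠ 0 := Nat.cast_ne_zero.mpr (by omega)
    have hn1 : (n : ℝ) + 1 ≠ 0 := by positivity
    have hr0 : (r : ℝ) ≠ 0 := Nat.cast_ne_zero.mpr (by omega)
    rw [Finset.sum_Icc_succ_top (by omega), ih]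
    have hh : ((harmonic (n + 1) : ℚ) : ℝ) = ((harmonic n : ℚ) : ℝ) + ((n : ℝ) + 1)⁻¹ := by
      rw [harmonic_succ]; push_cast; ring
    rw [hh]
    push_cast
    field_simp
    have hni : (n : ℝ) * (n : ℝ)⁻¹ = 1 := mul_inv_cancel₀ hn0
    linear_combination ((r : ℝ) + (r : ℝ) * n - (r : ℝ) ^ 2) * hni

/-- The success probability of the cutoff strategy `r` when the number of objects is
uniform on `[1,n]` in the best-or-worst secretary problem. -/
noncomputable def uniformProb (r n : ℕ) : ℝ :=
  ∑ i ∈ Finset.Icc (r + 1) n, 2 * ((i : ℝ) - r) * r / (i * (i - 1) * n)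

theorem stmt_10 (ϑ : ℝ) (hϑ : ϑ ∈ Set.Ioo (0 : ℝ) 1)
    (heq : Real.log ϑ = 2 * ϑ - 2) :
    Filter.Tendsto (fun n : ℕ => uniformProb ⌊ϑ * n⌋₊ n) Filter.atTop
      (nhds (2 * (ϑ - ϑ ^ 2))) := by
  obtain ⟨hθ0, hθ1⟩ := hϑ
  set R : ℕ → ℕ := fun n => ⌊ϑ * n⌋₊ with hR
  set H : ℕ → ℝ := fun n => ((harmonic n : ℚ) : ℝ) with hH
  -- basic limits
  have hrtop : Tendsto R atTop atTop := tendsto_nat_floor_mul_atTop ϑ hθ0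
  have hA : Tendsto (fun n : ℕ => (R n : ℝ) / n) atTop (nhds ϑ) :=
    (tendsto_nat_floor_mul_div_atTop hθ0.le).comp tendsto_natCast_atTop_atTop
  have hγ : Tendsto (fun n : ℕ => H n - Real.log n) atTop (nhds eulerMascheroniConstant) :=
    Real.tendsto_harmonic_sub_log
  have hγr : Tendsto (fun n : ℕ => H (R n) - Real.log (R n)) atTop
      (nhds eulerMascheroniConstant) := hγ.comp hrtop
  have hlogq : Tendsto (fun n : ℕ => Real.log ((R n : ℝ) / n)) atTop (nhds (Real.log ϑ)) :=
    ((Real.continuousAt_log hθ0.ne').tendsto.comp hA)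
  have hB : Tendsto (fun n : ℕ => H n - H (R n)) atTop (nhds (-Real.log ϑ)) := by
    have h := (hγ.sub hγr).sub hlogq
    rw [sub_self, zero_sub] at h
    apply h.congr'
    filter_upwards [hrtop.eventually_ge_atTop 1, eventually_ge_atTop 1] with n h1 h2
    have hr0 : (R n : ℝ) ≠ 0 := Nat.cast_ne_zero.mpr (by omega)
    have hn0 : (n : ℝ) ≠ 0 := Nat.cast_ne_zero.mpr (by omega)
    rw [Real.log_div hr0 hn0]
    ring
  have h1n : Tendsto (fun n : ℕ => (1 : ℝ) / n) atTop (nhds 0) :=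
    tendsto_one_div_atTop_nhds_zero_nat
  -- the model function
  have hF : Tendsto (fun n : ℕ =>
      2 * ((R n : ℝ) / n) * (H n - H (R n)) - 2 * ((R n : ℝ) / n) + 2 * (1 / n)
        + 2 * ((R n : ℝ) / n) * ((R n : ℝ) / n - 1 / n)) atTop
      (nhds (2 * ϑ * (-Real.log ϑ) - 2 * ϑ + 2 * 0 + 2 * ϑ * (ϑ - 0))) := by
    exact ((((hA.const_mul 2).mul hB).sub (hA.const_mul 2)).add (h1n.const_mul 2)).add
      ((hA.const_mul 2).mul (hA.sub h1n))
  have hval : 2 * ϑ * (-Real.log ϑ) - 2 * ϑ + 2 * 0 + 2 * ϑ * (ϑ - 0) = 2 * (ϑ - ϑ ^ 2) := by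
    rw [heq]; ring
  rw [hval] at hF
  apply hF.congr'
  filter_upwards [hrtop.eventually_ge_atTop 1, eventually_ge_atTop 1] with n h1 h2
  have hrn : R n ≤ n := by
    have h3 : ϑ * n ≤ (n : ℝ) := by
      nlinarith [Nat.cast_nonneg (α := ℝ) n]
    calc R n ≤ ⌊(n : ℝ)⌋₊ := Nat.floor_mono h3
    _ = n := Nat.floor_natCast n
  have hr0 : (R n : ℝ) ≠ 0 := Nat.cast_ne_zero.mpr (by omega)
  have hn0 : (n : ℝ) ≠ 0 := Nat.cast_ne_zero.mpr (by omega)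
  have key := sum_closed (R n) h1 n hrn
  have : uniformProb (R n) n
      = (∑ i ∈ Finset.Icc (R n + 1) n,
          2 * ((i : ℝ) - R n) * (R n) / ((i : ℝ) * ((i : ℝ) - 1))) / n := by
    rw [uniformProb, Finset.sum_div]
    refine Finset.sum_congr rfl fun i _ => ?_
    rw [div_div]
  rw [this, key]
  field_simp
  ring
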